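/- For every n ≥ 1, n! · Σ_{F ∈ PF(n)} ∏_{v ∈ F} (1 − 1/h_v)^{h_v − 1} = (n+1)^{n-1}, where PF(n) is the set of plane forests with n vertices. -/

import Mathlib

/-- Plane trees: nonempty rooted trees whose subtrees at each vertex are linearly ordered. -/
inductive PTree : Type
  | node : List PTree → PTree

namespace PTree

mutual
/-- The number of vertices of a plane tree. -/
def size : PTree → ℕ
  | .node cs => sizeList cs + 1
/-- The total number of vertices of a plane forest (a list of plane trees). -/
def sizeList : List PTree → ℕ
  | [] => 0
  | t :: ts => size t + sizeList ts
end

mutual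
/-- The multiset of hook lengths of a plane tree: the hook length of a vertex
is the number of its descendants, counting the vertex itself. -/
def hooks : PTree → Multiset ℕ+
  | .node cs => ⟨sizeList cs + 1, Nat.succ_pos _⟩ ::ₘ hooksList cs
/-- The multiset of hook lengths of a plane forest. -/
def hooksList : List PTree → Multiset ℕ+
  | [] => 0
  | t :: ts => hooks t + hooksList ts
end

end PTree

open Finset

lemma altsum : ∀ m : ℕ, ∀ d : ℕ, d < m → ∀ x : ℚ,
    ∑ k ∈ range (m+1), (-1:ℚ)^k * (m.choose k) * (x + k)^d = 0 := by
  intro m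
  induction m using Nat.strong_induction_on with
  | _ m ih =>
    match m with
    | 0 => intro d hd; omega
    | (m+1) =>
      intro d hd x
      have split : ∑ k ∈ range (m+2), (-1:ℚ)^k * ((m+1).choose k) * (x+k)^d
          = ∑ k ∈ range (m+1), (-1:ℚ)^k * (m.choose k) * ((x+k)^d - (x+(k+1))^d) := by
        have h1 : ∑ k ∈ range (m+2), (-1:ℚ)^k * ((m+1).choose k) * (x+k)^d
            = (∑ k ∈ range (m+1), (-1:ℚ)^(k+1) * ((m+1).choose (k+1)) * (x+(k+1))^d)
              + (x+0)^d := by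
          conv_lhs => rw [Finset.sum_range_succ']
          norm_num
        have h2 : ∀ k ∈ range (m+1), (-1:ℚ)^(k+1) * ((m+1).choose (k+1)) * (x+(k+1))^d
            = (-(-1:ℚ)^k * (m.choose k) * (x+(k+1))^d)
              + (-1:ℚ)^(k+1) * (m.choose (k+1)) * (x+(k+1))^d := by
          intro k _
          have : ((m+1).choose (k+1) : ℚ) = (m.choose k : ℚ) + (m.choose (k+1) : ℚ) := by
            rw [Nat.choose_succ_succ]; push_cast; ring
          rw [this]; ring
        have h3 : (∑ k ∈ range (m+1), (-1:ℚ)^(k+1) * (m.choose (k+1)) * (x+(k+1))^d)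
            = (∑ k ∈ range (m+1), (-1:ℚ)^k * (m.choose k) * (x+k)^d) - (x+0)^d := by
          have h4 : ∑ k ∈ range (m+2), (-1:ℚ)^k * (m.choose k) * (x+k)^d
              = (∑ k ∈ range (m+1), (-1:ℚ)^(k+1) * (m.choose (k+1)) * (x+(k+1))^d)
                + (x+0)^d := by
            conv_lhs => rw [Finset.sum_range_succ']
            norm_num
          have h5 : ∑ k ∈ range (m+2), (-1:ℚ)^k * (m.choose k) * (x+k)^d
              = ∑ k ∈ range (m+1), (-1:ℚ)^k * (m.choose k) * (x+k)^d := by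
            rw [Finset.sum_range_succ, Nat.choose_succ_self]
            simp
          rw [← h5, h4]; ring
        have h7 : ∑ k ∈ range (m+1), (-1:ℚ)^k * (m.choose k) * ((x+k)^d - (x+(k+1))^d)
            = (∑ k ∈ range (m+1), (-1:ℚ)^k * (m.choose k) * (x+k)^d)
              - ∑ k ∈ range (m+1), (-1:ℚ)^k * (m.choose k) * (x+(k+1))^d := by
          rw [← Finset.sum_sub_distrib]
          exact Finset.sum_congr rfl fun k _ => by ring
        rw [h1, Finset.sum_congr rfl h2, Finset.sum_add_distrib, h3, h7]
        have h6 : ∑ k ∈ range (m+1), -(-1:ℚ)^k * (m.choose k) * (x+(k+1))^d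
            = - ∑ k ∈ range (m+1), (-1:ℚ)^k * (m.choose k) * (x+(k+1))^d := by
          rw [← Finset.sum_neg_distrib]
          exact Finset.sum_congr rfl fun k _ => by ring
        rw [h6]; ring
      rw [split]
      have expand : ∀ k : ℕ, ((x+(k:ℚ))^d - (x+((k:ℚ)+1))^d)
          = - ∑ j ∈ range d, ((x+(k:ℚ))^j * (d.choose j : ℚ)) := by
        intro k
        have h5 : (x + (k:ℚ) + 1) ^ d = ∑ j ∈ range (d+1), (x+(k:ℚ))^j * (d.choose j : ℚ) := by
          have := add_pow (x + (k:ℚ)) 1 d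
          simpa using this
        have h6 : (x + ((k:ℚ)+1)) ^ d = (x + (k:ℚ) + 1) ^ d := by ring_nf
        rw [h6, h5, Finset.sum_range_succ, Nat.choose_self]
        ring
      calc ∑ k ∈ range (m+1), (-1:ℚ)^k * (m.choose k) * ((x+k)^d - (x+(k+1))^d)
          = ∑ k ∈ range (m+1), ∑ j ∈ range d,
              -((d.choose j : ℚ) * ((-1:ℚ)^k * (m.choose k) * (x+k)^j)) := by
            refine Finset.sum_congr rfl fun k _ => ?_
            rw [expand k, mul_neg, Finset.mul_sum, ← Finset.sum_neg_distrib]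
            exact Finset.sum_congr rfl fun j _ => by ring
        _ = ∑ j ∈ range d, -((d.choose j : ℚ) *
              ∑ k ∈ range (m+1), (-1:ℚ)^k * (m.choose k) * (x+k)^j) := by
            rw [Finset.sum_comm]
            refine Finset.sum_congr rfl fun j _ => ?_
            rw [Finset.mul_sum, ← Finset.sum_neg_distrib]
        _ = 0 := by
            refine Finset.sum_eq_zero fun j hj => ?_
            rw [ih m (Nat.lt_succ_self m) j (by
              have := Finset.mem_range.mp hj; omega) x]
            ring

def qa (x : ℚ) : ℕ → ℚ
  | 0 => 1
  | (k+1) => x * (x + (k+1))^k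

lemma qa_zero (x : ℚ) : qa x 0 = 1 := rfl

lemma qa_succ (x : ℚ) (k : ℕ) : qa x (k+1) = x * (x + (k+1))^k := rfl

lemma qa_eq (x : ℚ) (k : ℕ) (hk : 1 ≤ k) : qa x k = x * (x + k)^(k-1) := by
  obtain ⟨k', rfl⟩ := Nat.exists_eq_add_of_le hk
  rw [add_comm 1 k', qa_succ]
  push_cast
  norm_num

lemma pow_eq_mul_left (A : ℚ) (m : ℕ) (hm : 1 ≤ m) : A^m = A * A^(m-1) := by
  conv_lhs => rw [show m = (m-1)+1 from by omega]
  rw [pow_succ]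
  ring

lemma pow_eq_mul_right (A : ℚ) (m : ℕ) (hm : 1 ≤ m) : A^m = A^(m-1) * A := by
  conv_lhs => rw [show m = (m-1)+1 from by omega]
  rw [pow_succ]

lemma abelA (n : ℕ) (x y : ℚ) :
    ∑ k ∈ range (n+1), (n.choose k : ℚ) * qa x k * (y + ((n-k : ℕ) : ℚ))^(n-k)
      = (x+y+(n:ℚ))^n := by
  have expand : ∀ k ∈ range (n+1),
      (n.choose k : ℚ) * qa x k * (y + ((n-k : ℕ) : ℚ))^(n-k)
      = ∑ j ∈ range (n+1-k), (n.choose k : ℚ) * qa x k *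
          ((x+y+(n:ℚ))^j * (-(x+(k:ℚ)))^(n-k-j) * ((n-k).choose j : ℚ)) := by
    intro k hk
    have hk' : k ≤ n := Nat.lt_succ_iff.mp (Finset.mem_range.mp hk)
    have hc : ((n-k : ℕ) : ℚ) = (n:ℚ) - k := by
      push_cast [Nat.cast_sub hk']; ring
    have hb : y + ((n-k : ℕ) : ℚ) = (x+y+(n:ℚ)) + (-(x+(k:ℚ))) := by rw [hc]; ring
    have := add_pow (x+y+(n:ℚ)) (-(x+(k:ℚ))) (n-k)
    rw [hb, this, Finset.mul_sum]
    have : n - k + 1 = n + 1 - k := by omega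
    rw [this]
  rw [Finset.sum_congr rfl expand]
  have swap : ∑ k ∈ range (n+1), ∑ j ∈ range (n+1-k), ((n.choose k : ℚ) * qa x k *
          ((x+y+(n:ℚ))^j * (-(x+(k:ℚ)))^(n-k-j) * ((n-k).choose j : ℚ)))
      = ∑ j ∈ range (n+1), ∑ k ∈ range (n+1-j), ((n.choose k : ℚ) * qa x k *
          ((x+y+(n:ℚ))^j * (-(x+(k:ℚ)))^(n-k-j) * ((n-k).choose j : ℚ))) := by
    refine Finset.sum_comm' ?_
    intro k j
    simp only [Finset.mem_range]
    omega
  rw [swap]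
  rw [Finset.sum_range_succ]
  have last : ∑ k ∈ range (n+1-n), ((n.choose k : ℚ) * qa x k *
          ((x+y+(n:ℚ))^n * (-(x+(k:ℚ)))^(n-k-n) * ((n-k).choose n : ℚ)))
      = (x+y+(n:ℚ))^n := by
    have : n + 1 - n = 1 := by omega
    rw [this, Finset.sum_range_one]
    simp [qa_zero]
  rw [last]
  have rest : ∀ j ∈ range n, ∑ k ∈ range (n+1-j), ((n.choose k : ℚ) * qa x k *
          ((x+y+(n:ℚ))^j * (-(x+(k:ℚ)))^(n-k-j) * ((n-k).choose j : ℚ))) = 0 := by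
    intro j hj
    have hjn : j < n := Finset.mem_range.mp hj
    -- rewrite each term
    have term : ∀ k ∈ range (n+1-j), ((n.choose k : ℚ) * qa x k *
          ((x+y+(n:ℚ))^j * (-(x+(k:ℚ)))^(n-k-j) * ((n-k).choose j : ℚ)))
        = ((n.choose j : ℚ) * (x+y+(n:ℚ))^j * (-1)^(n-j)) *
            ((-1:ℚ)^k * ((n-j).choose k : ℚ) * (x * (x+(k:ℚ))^(n-j-1))) := by
      intro k hk
      have hkj : k ≤ n - j := by have := Finset.mem_range.mp hk; omega
      have hkn : k + j ≤ n := by omega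
      -- choose identity
      have hcc : (n.choose k : ℚ) * ((n-k).choose j : ℚ)
          = (n.choose j : ℚ) * ((n-j).choose k : ℚ) := by
        have e1 := Nat.choose_mul (n := n) (k := k + j) (show k ≤ k + j by omega)
        have e2 := Nat.choose_mul (n := n) (k := k + j) (show j ≤ k + j by omega)
        have e3 : (k+j).choose k = (k+j).choose j := by
          rw [← Nat.choose_symm (show k ≤ k + j by omega)]
          congr 1
          omega
        have e4 : k + j - k = j := by omega
        have e5 : k + j - j = k := by omega
        rw [e4] at e1
        rw [e5] at e2
        have : n.choose k * (n - k).choose j = n.choose j * (n - j).choose k := by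
          rw [← e1, ← e2, e3]
        exact_mod_cast congrArg (Nat.cast : ℕ → ℚ) this
      -- sign
      have hsign : (-(x+(k:ℚ)))^(n-k-j) = (-1:ℚ)^(n-k-j) * (x+(k:ℚ))^(n-k-j) := by
        rw [neg_pow]
      have hsign2 : (-1:ℚ)^(n-k-j) * (-1:ℚ)^k = (-1:ℚ)^(n-j) := by
        rw [← pow_add]
        congr 1
        omega
      -- power combine
      have hpow : qa x k * (x+(k:ℚ))^(n-k-j) = x * (x+(k:ℚ))^(n-j-1) := by
        rcases Nat.eq_zero_or_pos k with rfl | hkpos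
        · simp only [qa_zero, one_mul, Nat.sub_zero, Nat.cast_zero, add_zero]
          conv_lhs => rw [show n - j = (n - j - 1) + 1 from by omega]
          rw [pow_succ]
          ring
        · rw [qa_eq x k hkpos, mul_assoc, ← pow_add]
          congr 2
          omega
      have h2k : (-1:ℚ)^k * (-1:ℚ)^k = 1 := by
        rw [← pow_add, ← two_mul, pow_mul]
        norm_num
      calc (n.choose k : ℚ) * qa x k *
          ((x+y+(n:ℚ))^j * (-(x+(k:ℚ)))^(n-k-j) * ((n-k).choose j : ℚ))
          = ((n.choose k : ℚ) * ((n-k).choose j : ℚ)) * (x+y+(n:ℚ))^j *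
              ((-1:ℚ)^(n-k-j) * (-1:ℚ)^k) * ((-1:ℚ)^k * (qa x k * (x+(k:ℚ))^(n-k-j))) := by
            rw [hsign]
            linear_combination (-( (n.choose k : ℚ) * ((n-k).choose j : ℚ) * (x+y+(n:ℚ))^j * (-1:ℚ)^(n-k-j) * qa x k * (x+(k:ℚ))^(n-k-j))) * h2k
        _ = ((n.choose j : ℚ) * (x+y+(n:ℚ))^j * (-1)^(n-j)) *
            ((-1:ℚ)^k * ((n-j).choose k : ℚ) * (x * (x+(k:ℚ))^(n-j-1))) := by
            rw [hcc, hsign2, hpow]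
            ring
    rw [Finset.sum_congr rfl term, ← Finset.mul_sum]
    have : n + 1 - j = (n - j) + 1 := by omega
    rw [this]
    have inner : ∑ k ∈ range ((n-j)+1), ((-1:ℚ)^k * ((n-j).choose k : ℚ) * (x * (x+(k:ℚ))^(n-j-1)))
        = 0 := by
      have h0 := altsum (n-j) (n-j-1) (by omega) x
      calc ∑ k ∈ range ((n-j)+1), ((-1:ℚ)^k * ((n-j).choose k : ℚ) * (x * (x+(k:ℚ))^(n-j-1)))
          = x * ∑ k ∈ range ((n-j)+1), ((-1:ℚ)^k * ((n-j).choose k : ℚ) * (x+(k:ℚ))^(n-j-1)) := by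
            rw [Finset.mul_sum]
            exact Finset.sum_congr rfl fun k _ => by ring
        _ = 0 := by rw [h0]; ring
    rw [inner, mul_zero]
  rw [Finset.sum_eq_zero rest, zero_add]

lemma abelB (n : ℕ) (hn : 1 ≤ n) (x y : ℚ) :
    ∑ k ∈ range (n+1), (n.choose k : ℚ) * qa x k * qa y (n-k)
      = (x+y) * (x+y+(n:ℚ))^(n-1) := by
  have hA := abelA n x y
  rw [Finset.sum_range_succ] at hA
  have hAn : (n.choose n : ℚ) * qa x n * (y + ((n-n : ℕ) : ℚ))^(n-n) = qa x n := by
    simp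
  rw [hAn] at hA
  have splitA : ∀ k ∈ range n,
      (n.choose k : ℚ) * qa x k * (y + ((n-k : ℕ) : ℚ))^(n-k)
      = (n.choose k : ℚ) * qa x k * qa y (n-k)
        + ((n:ℚ) * ((n-1).choose k : ℚ)) * qa x k *
            ((y+1) + (((n-1)-k : ℕ) : ℚ))^((n-1)-k) := by
    intro k hk
    have hkn : k < n := Finset.mem_range.mp hk
    have h1 : 1 ≤ n - k := by omega
    have hq : qa y (n-k) = y * (y + ((n-k : ℕ):ℚ))^((n-k)-1) := qa_eq y (n-k) h1
    have hpow : (y + ((n-k : ℕ) : ℚ))^(n-k)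
        = (y + ((n-k : ℕ):ℚ)) * (y + ((n-k : ℕ):ℚ))^((n-k)-1) :=
      pow_eq_mul_left _ _ h1
    have hexp : (n-k) - 1 = (n-1) - k := by omega
    have hchoose : ((n-k : ℕ) : ℚ) * (n.choose k : ℚ) = (n:ℚ) * ((n-1).choose k : ℚ) := by
      have e1 := Nat.add_one_mul_choose_eq (n-1) k
      rw [Nat.sub_add_cancel hn] at e1
      have e2 := Nat.choose_succ_right_eq n k
      have e3 : (n-k) * n.choose k = n * (n-1).choose k := by
        rw [e1, e2, Nat.mul_comm]
      exact_mod_cast congrArg (Nat.cast : ℕ → ℚ) e3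
    have hbase : y + ((n-k : ℕ) : ℚ) = (y+1) + (((n-1)-k : ℕ) : ℚ) := by
      push_cast [Nat.cast_sub hkn.le, Nat.cast_sub (show k ≤ n-1 by omega),
        Nat.cast_sub (show 1 ≤ n from hn)]
      ring
    rw [hpow, hq, hexp, ← hbase]
    linear_combination (qa x k * (y + ((n-k : ℕ):ℚ))^((n-1)-k)) * hchoose
  rw [Finset.sum_congr rfl splitA, Finset.sum_add_distrib] at hA
  have hH : ∑ k ∈ range n, ((n:ℚ) * ((n-1).choose k : ℚ)) * qa x k *
      ((y+1) + (((n-1)-k : ℕ) : ℚ))^((n-1)-k) = (n:ℚ) * (x+y+(n:ℚ))^(n-1) := by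
    have hA' := abelA (n-1) x (y+1)
    rw [show (n-1)+1 = n from by omega] at hA'
    have : x + (y+1) + ((n-1 : ℕ):ℚ) = x + y + (n:ℚ) := by
      push_cast [Nat.cast_sub hn]
      ring
    rw [this] at hA'
    rw [← hA', Finset.mul_sum]
    exact Finset.sum_congr rfl fun k _ => by ring
  rw [hH] at hA
  -- hA : Σ_{range n} C qxk qa y (n-k) + n (x+y+n)^(n-1) + qa x n = (x+y+n)^n
  rw [Finset.sum_range_succ]
  have hBn : (n.choose n : ℚ) * qa x n * qa y (n-n) = qa x n := by
    simp [qa_zero]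
  rw [hBn]
  have hpowN : (x+y+(n:ℚ))^n = (x+y+(n:ℚ))^(n-1) * (x+y+(n:ℚ)) :=
    pow_eq_mul_right _ _ hn
  rw [hpowN] at hA
  linarith [hA]

lemma keyid (n : ℕ) (hn : 1 ≤ n) :
    ∑ m ∈ range n, ((n.choose (m+1) : ℚ)) * ((m:ℚ))^m * qa 1 (n-(m+1))
      = ((n:ℚ)+1)^(n-1) := by
  have hB := abelB n hn (-1) 1
  norm_num at hB
  rw [Finset.sum_range_succ'] at hB
  have h0 : (n.choose 0 : ℚ) * qa (-1) 0 * qa 1 (n-0) = (1+(n:ℚ))^(n-1) := by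
    rw [qa_zero, Nat.sub_zero, qa_eq 1 n hn]
    simp
  have hterm : ∀ m ∈ range n, (n.choose (m+1) : ℚ) * qa (-1) (m+1) * qa 1 (n-(m+1))
      = -((n.choose (m+1) : ℚ) * ((m:ℚ))^m * qa 1 (n-(m+1))) := by
    intro m _
    rw [qa_succ]
    rw [show (-1 : ℚ) + ((m:ℚ) + 1) = (m:ℚ) from by ring]
    ring
  rw [h0, Finset.sum_congr rfl hterm, Finset.sum_neg_distrib] at hB
  have : (1+(n:ℚ))^(n-1) = ((n:ℚ)+1)^(n-1) := by ring_nf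
  linarith [hB]

lemma size_node (cs : List PTree) : (PTree.node cs).size = PTree.sizeList cs + 1 := by
  rw [PTree.size]

lemma sizeList_nil : PTree.sizeList [] = 0 := by rw [PTree.sizeList]

lemma sizeList_cons (t : PTree) (ts : List PTree) :
    PTree.sizeList (t :: ts) = t.size + PTree.sizeList ts := by rw [PTree.sizeList]

lemma size_pos (t : PTree) : 1 ≤ t.size := by
  cases t with
  | node cs => rw [size_node]; omega

lemma sizeList_eq_zero {l : List PTree} (h : PTree.sizeList l = 0) : l = [] := by
  cases l with
  | nil => rfl
  | cons t ts =>
    rw [sizeList_cons] at h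
    have := size_pos t
    omega

open Classical in
noncomputable def forestFS : ℕ → Finset (List PTree)
  | 0 => {([] : List PTree)}
  | (n+1) =>
    (Finset.range (n+1)).attach.biUnion fun m =>
      (((forestFS m.1).image PTree.node) ×ˢ forestFS (n - m.1)).image
        fun p => p.1 :: p.2
  decreasing_by
  · exact Nat.lt_succ_of_le (Nat.le_of_lt_succ (Finset.mem_range.mp m.2))
  · omega

lemma mem_forestFS : ∀ (n : ℕ) (l : List PTree), l ∈ forestFS n ↔ PTree.sizeList l = n := by
  intro n
  induction n using Nat.strong_induction_on with
  | _ n ih =>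
    match n with
    | 0 =>
      intro l
      rw [forestFS]
      simp only [Finset.mem_singleton]
      constructor
      · rintro rfl; exact sizeList_nil
      · exact sizeList_eq_zero
    | (n+1) =>
      intro l
      rw [forestFS]
      simp only [Finset.mem_biUnion, Finset.mem_attach, true_and, Finset.mem_image,
        Finset.mem_product, Subtype.exists, Finset.mem_range, Prod.exists]
      constructor
      · rintro ⟨m, hm, t, l', ⟨⟨ht, hl'⟩, rfl⟩⟩
        obtain ⟨c, hc, rfl⟩ := ht
        have h1 : PTree.sizeList c = m := (ih m hm c).mp hc
        have h2 : PTree.sizeList l' = n - m := (ih (n - m) (Nat.lt_succ_of_le (Nat.sub_le n m)) l').mp hl'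
        rw [sizeList_cons, size_node, h1, h2]
        omega
      · intro hl
        cases l with
        | nil => rw [sizeList_nil] at hl; omega
        | cons t l' =>
          cases t with
          | node c =>
            rw [sizeList_cons, size_node] at hl
            refine ⟨PTree.sizeList c, by omega, PTree.node c, l', ⟨⟨?_, ?_⟩, rfl⟩⟩
            · exact ⟨c, (ih _ (by omega) c).mpr rfl, rfl⟩
            · exact (ih _ (by omega) l').mpr (by omega)

noncomputable def wT (t : PTree) : ℚ :=
  ((PTree.hooks t).map fun (h : ℕ+) => (1 - 1 / (h : ℚ)) ^ ((h : ℕ) - 1)).prod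

noncomputable def wF (l : List PTree) : ℚ :=
  ((PTree.hooksList l).map fun (h : ℕ+) => (1 - 1 / (h : ℚ)) ^ ((h : ℕ) - 1)).prod

lemma wF_nil : wF [] = 1 := by
  rw [wF, PTree.hooksList]
  simp

lemma wF_cons (t : PTree) (ts : List PTree) : wF (t :: ts) = wT t * wF ts := by
  rw [wF, PTree.hooksList, Multiset.map_add, Multiset.prod_add, wT, wF]

lemma wT_node (cs : List PTree) :
    wT (PTree.node cs) = (1 - 1/((PTree.sizeList cs : ℚ)+1))^(PTree.sizeList cs) * wF cs := by
  rw [wT, PTree.hooks]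
  erw [Multiset.map_cons, Multiset.prod_cons]
  rw [wF]
  congr 1
  norm_num [PNat.mk_ofNat]

noncomputable def fw (n : ℕ) : ℚ := ∑ l ∈ forestFS n, wF l

lemma fw_zero : fw 0 = 1 := by
  rw [fw, forestFS]
  simp [wF_nil]

lemma fw_succ (n : ℕ) :
    fw (n+1) = ∑ m ∈ range (n+1), (1 - 1/((m:ℚ)+1))^m * fw m * fw (n-m) := by
  classical
  rw [fw, forestFS]
  rw [Finset.sum_biUnion]
  · rw [← Finset.sum_attach (range (n+1)) (fun m => (1 - 1/((m:ℚ)+1))^m * fw m * fw (n-m))]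
    refine Finset.sum_congr rfl fun m _ => ?_
    rw [Finset.sum_image (by
      intro p hp q hq hpq
      exact Prod.ext (List.head_eq_of_cons_eq hpq) (List.tail_eq_of_cons_eq hpq))]
    rw [Finset.sum_product]
    have inner : ∀ t ∈ (forestFS m.1).image PTree.node,
        ∑ l' ∈ forestFS (n - m.1), wF (t :: l') = wT t * fw (n - m.1) := by
      intro t _
      rw [fw, Finset.mul_sum]
      exact Finset.sum_congr rfl fun l' _ => wF_cons t l'
    rw [Finset.sum_congr rfl inner, ← Finset.sum_mul]
    have outer : ∑ t ∈ (forestFS m.1).image PTree.node, wT t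
        = (1 - 1/((m.1:ℚ)+1))^m.1 * fw m.1 := by
      rw [Finset.sum_image (by
        intro a _ b _ hab
        injection hab)]
      rw [fw, Finset.mul_sum]
      refine Finset.sum_congr rfl fun c hc => ?_
      have : PTree.sizeList c = m.1 := (mem_forestFS m.1 c).mp hc
      rw [wT_node, this]
    rw [outer]
  · -- disjointness
    intro a _ b _ hab
    simp only [Finset.disjoint_left]
    intro l hla hlb
    apply hab
    simp only [Finset.mem_image, Finset.mem_product, Prod.exists] at hla hlb
    obtain ⟨t, l', ⟨⟨ht, _⟩, rfl⟩⟩ := hla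
    obtain ⟨t2, l2, ⟨⟨ht2, _⟩, he⟩⟩ := hlb
    obtain rfl : t2 = t := List.head_eq_of_cons_eq he
    obtain ⟨c, hc, rfl⟩ := ht
    obtain ⟨c2, hc2, hnode⟩ := ht2
    have h1 : PTree.sizeList c = a.1 := (mem_forestFS a.1 c).mp hc
    have h2 : PTree.sizeList c2 = b.1 := (mem_forestFS b.1 c2).mp hc2
    have hcc : c2 = c := by injection hnode
    refine Subtype.ext ?_
    rw [← h1, ← h2, hcc]

lemma my_one_sub_div (m : ℕ) : (1 - 1/((m:ℚ)+1)) = (m:ℚ)/((m:ℚ)+1) := by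
  have h : ((m:ℚ)+1) ≠ 0 := by positivity
  field_simp
  ring

lemma hq2 (m : ℕ) : (1 - 1/((m:ℚ)+1))^m * qa 1 m = (m:ℚ)^m / ((m:ℚ)+1) := by
  rcases Nat.eq_zero_or_pos m with rfl | hm
  · norm_num [qa_zero]
  · rw [qa_eq 1 m hm, my_one_sub_div, div_pow,
      show ((1:ℚ)+(m:ℚ)) = (m:ℚ)+1 from by ring,
      pow_eq_mul_right ((m:ℚ)+1) m hm]
    have h1 : ((m:ℚ)+1) ≠ 0 := by positivity
    have h2 : ((m:ℚ)+1)^(m-1) ≠ 0 := pow_ne_zero _ h1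
    field_simp

lemma fw_fact : ∀ n : ℕ, fw n * (n.factorial : ℚ) = qa 1 n := by
  intro n
  induction n using Nat.strong_induction_on with
  | _ n ih =>
    match n with
    | 0 => simp [fw_zero, qa_zero]
    | (n+1) =>
      rw [fw_succ, Finset.sum_mul]
      have hterm : ∀ m ∈ range (n+1),
          (1 - 1/((m:ℚ)+1))^m * fw m * fw (n-m) * (((n+1).factorial : ℚ))
          = (((n+1).choose (m+1) : ℚ)) * ((m:ℚ))^m * qa 1 ((n+1)-(m+1)) := by
        intro m hm
        have hmn : m ≤ n := by have := Finset.mem_range.mp hm; omega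
        have hfm : (m.factorial : ℚ) ≠ 0 := by
          exact_mod_cast (Nat.factorial_pos m).ne'
        have hfnm : ((n-m).factorial : ℚ) ≠ 0 := by
          exact_mod_cast (Nat.factorial_pos (n-m)).ne'
        have efm : fw m = qa 1 m / (m.factorial:ℚ) :=
          (eq_div_iff hfm).mpr (ih m (by omega))
        have efnm : fw (n-m) = qa 1 (n-m) / ((n-m).factorial:ℚ) :=
          (eq_div_iff hfnm).mpr (ih (n-m) (by omega))
        have hfac : (((n+1).factorial : ℚ))
            = (((n+1).choose (m+1) : ℚ)) * ((((m:ℚ))+1) * (m.factorial:ℚ) * ((n-m).factorial:ℚ)) := by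
          have h5 := Nat.choose_mul_factorial_mul_factorial (show m+1 ≤ n+1 by omega)
          have h' : (n+1) - (m+1) = n - m := by omega
          rw [h'] at h5
          have h6 := congrArg (Nat.cast : ℕ → ℚ) h5
          push_cast [Nat.factorial_succ] at h6 ⊢
          linear_combination (-1 : ℚ) * h6
        have h3 : (n+1)-(m+1) = n-m := by omega
        rw [h3, efm, efnm, hfac]
        have hm1 : ((m:ℚ)+1) ≠ 0 := by positivity
        calc (1 - 1/((m:ℚ)+1))^m * (qa 1 m / (m.factorial:ℚ)) * (qa 1 (n-m) / ((n-m).factorial:ℚ))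
              * ((((n+1).choose (m+1) : ℚ)) * ((((m:ℚ))+1) * (m.factorial:ℚ) * ((n-m).factorial:ℚ)))
            = ((1 - 1/((m:ℚ)+1))^m * qa 1 m) * (((m:ℚ)+1) * (((n+1).choose (m+1) : ℚ) * qa 1 (n-m)))
              * ((m.factorial:ℚ)/(m.factorial:ℚ)) * (((n-m).factorial:ℚ)/((n-m).factorial:ℚ)) := by
              ring
          _ = ((m:ℚ)^m / ((m:ℚ)+1)) * (((m:ℚ)+1) * (((n+1).choose (m+1) : ℚ) * qa 1 (n-m))) := by
              rw [hq2 m, div_self hfm, div_self hfnm]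
              ring
          _ = (((n+1).choose (m+1) : ℚ)) * ((m:ℚ))^m * qa 1 (n-m) := by
              field_simp
      rw [Finset.sum_congr rfl hterm, keyid (n+1) (by omega)]
      rw [qa_eq 1 (n+1) (by omega)]
      push_cast
      ring_nf

/-- A hook length formula for plane forests. -/
theorem hook_formula_plane_forests_power (n : ℕ) (hn : 1 ≤ n) :
    (n.factorial : ℚ) *
      ∑ᶠ F : {l : List PTree // PTree.sizeList l = n},
        (PTree.hooksList (F : List PTree) |>.map fun (h : ℕ+) =>
          (1 - 1 / (h : ℚ)) ^ ((h : ℕ) - 1)).prod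
    = ((n : ℚ) + 1) ^ (n - 1) := by
  classical
  have hco : ∑ᶠ F : {l : List PTree // PTree.sizeList l = n},
      (PTree.hooksList (F : List PTree) |>.map fun (h : ℕ+) =>
        (1 - 1 / (h : ℚ)) ^ ((h : ℕ) - 1)).prod = fw n := by
    show ∑ᶠ F : {l : List PTree // PTree.sizeList l = n}, wF F.1 = fw n
    set s : Finset {l : List PTree // PTree.sizeList l = n} :=
      (forestFS n).attach.map
        ⟨fun x => (⟨x.1, (mem_forestFS n x.1).mp x.2⟩ : {l : List PTree // PTree.sizeList l = n}),
          by intro a b hab; cases a; cases b; simpa [Subtype.mk.injEq] using hab⟩ with hsdef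
    have hs : Function.support (fun F : {l : List PTree // PTree.sizeList l = n} => wF F.1)
        ⊆ (s : Set {l : List PTree // PTree.sizeList l = n}) := by
      intro F _
      rw [Finset.mem_coe, hsdef, Finset.mem_map]
      exact ⟨⟨F.1, (mem_forestFS n F.1).mpr F.2⟩, Finset.mem_attach _ _, Subtype.ext rfl⟩
    rw [finsum_eq_sum_of_support_subset _ hs, hsdef, Finset.sum_map]
    rw [fw, ← Finset.sum_attach (forestFS n) (fun l => wF l)]
    rfl
  rw [hco]
  have h := fw_fact n
  rw [qa_eq 1 n hn] at h
  calc (n.factorial:ℚ) * fw n = fw n * (n.factorial:ℚ) := by ring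
    _ = 1 * (1+(n:ℚ))^(n-1) := h
    _ = ((n:ℚ)+1)^(n-1) := by rw [one_mul, add_comm 1 (n:ℚ)]
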